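/- Let R be a GCD domain and f, g ∈ R not both zero, with d = gcd(f,g). Then the kernel of the R-linear map R² → R, (a,b) ↦ f·a + g·b, is the cyclic submodule generated by (g/d, −f/d). -/

import Mathlib

/-- Let `R` be a GCD domain, `f, g ∈ R` not both zero, `d = gcd(f,g)`, and write
`f = d·f'`, `g = d·g'`.  Then the kernel of the map `R² → R`, `(a,b) ↦ f·a + g·b`,
is the cyclic submodule generated by `(g', −f') = (g/d, −f/d)`. -/
theorem statement_11 (R : Type*) [CommRing R] [IsDomain R] [GCDMonoid R]
    (f g : R) (hfg : ¬(f = 0 ∧ g = 0)) (f' g' : R)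
    (hf : f = gcd f g * f') (hg : g = gcd f g * g') :
    LinearMap.ker
        (LinearMap.coprod (LinearMap.toSpanSingleton R R f)
          (LinearMap.toSpanSingleton R R g)) =
      Submodule.span R {((g', -f') : R × R)} := by
  have hd : gcd f g ≠ 0 := fun h => hfg ((gcd_eq_zero_iff f g).1 h)
  have hu : IsUnit (gcd f' g') := by
    obtain ⟨u, hu2⟩ : Associated (gcd f g * gcd f' g') (gcd f g) := by
      have := (gcd_mul_left' (gcd f g) f' g')
      rw [← hf, ← hg] at this; exact this.symm
    refine IsUnit.of_mul_eq_one (u : R) ?_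
    apply mul_left_cancel₀ hd
    rw [mul_one, ← mul_assoc, hu2]
  apply le_antisymm
  · rintro ⟨a, b⟩ hx
    simp only [LinearMap.mem_ker, LinearMap.coprod_apply, LinearMap.toSpanSingleton_apply,
      smul_eq_mul] at hx
    by_cases hg0 : g' = 0
    · have hgz : g = 0 := by rw [hg, hg0, mul_zero]
      have hf0 : f ≠ 0 := fun h => hfg ⟨h, hgz⟩
      have ha : a = 0 := by
        rw [hgz, mul_zero, add_zero, mul_eq_zero] at hx
        exact hx.resolve_right hf0
      have hfu : IsUnit f' := (gcd_zero_right' f').isUnit (hg0 ▸ hu)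
      obtain ⟨v, hv⟩ := hfu
      apply Submodule.mem_span_singleton.2
      refine ⟨-(b * (↑v⁻¹ : Rˣ)), Prod.ext ?_ ?_⟩
      · simp [hg0, ha]
      · show -(b * (↑v⁻¹ : Rˣ)) * -f' = b
        rw [← hv, neg_mul_neg, mul_assoc, Units.inv_mul, mul_one]
    · have hsum : a * f' + b * g' = 0 := by
        have h0 : gcd f g * (a * f' + b * g') = 0 := by
          linear_combination hx - a * hf - b * hg
        exact (mul_eq_zero.1 h0).resolve_left hd
      have hdvd : g' ∣ a * f' := ⟨-b, by linear_combination hsum⟩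
      have hdvd2 : g' ∣ a * gcd g' f' := dvd_mul_gcd_of_dvd_mul hdvd
      have hu' : IsUnit (gcd g' f') := by
        obtain ⟨w, hw⟩ := (gcd_comm' f' g')
        exact hw ▸ hu.mul w.isUnit
      obtain ⟨c, hc⟩ := (IsUnit.dvd_mul_right hu').mp hdvd2
      apply Submodule.mem_span_singleton.2
      have hb : b = -(c * f') := by
        have h1 : g' * (c * f' + b) = 0 := by
          rw [hc] at hsum; linear_combination hsum
        have h2 := (mul_eq_zero.1 h1).resolve_left hg0
        linear_combination h2
      refine ⟨c, Prod.ext ?_ ?_⟩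
      · show c * g' = a
        rw [hc, mul_comm]
      · show c * -f' = b
        rw [hb]; ring
  · rw [Submodule.span_singleton_le_iff_mem, LinearMap.mem_ker]
    simp only [LinearMap.coprod_apply, LinearMap.toSpanSingleton_apply, smul_eq_mul]
    linear_combination g' * hf - f' * hg
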